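/- Let α and ρ be reals in (0, 1/2) with H(α) + H(ρ) > 1, where H is the binary entropy. Then for all sufficiently large n, with a = ⌊αn⌋ and r = ⌊ρn⌋, one has C(n, a) · ∑_{i=0}^{r} C(n, i) > 2^n. -/

import Mathlib

open Real Filter

/-- The binary entropy function. -/
noncomputable def binEnt (x : ℝ) : ℝ := -x * Real.logb 2 x - (1 - x) * Real.logb 2 (1 - x)

-- step up: for j < k ≤ n
lemma step_up (n k j : ℕ) (hk : k ≤ n) (hj : j < k) :
    n.choose j * k ^ j * (n - k) ^ (n - j) ≤
      n.choose (j + 1) * k ^ (j + 1) * (n - k) ^ (n - (j + 1)) := by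
  have hjn : j < n := lt_of_lt_of_le hj hk
  have hE : n - j = (n - (j+1)) + 1 := by omega
  have key : n.choose j * (n - k) ≤ n.choose (j+1) * k := by
    have h1 : n.choose (j+1) * (j+1) = n.choose j * (n - j) := Nat.choose_succ_right_eq n j
    have h2 : (n - k) * (j + 1) ≤ (n - j) * k :=
      Nat.mul_le_mul (by omega) (by omega)
    have h3 : n.choose j * (n - k) * (j+1) ≤ n.choose (j+1) * k * (j+1) := by
      calc n.choose j * (n - k) * (j+1) = n.choose j * ((n-k)*(j+1)) := by ring
        _ ≤ n.choose j * ((n-j)*k) := Nat.mul_le_mul_left _ h2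
        _ = n.choose (j+1) * (j+1) * k := by rw [h1]; ring
        _ = n.choose (j+1) * k * (j+1) := by ring
    exact Nat.le_of_mul_le_mul_right h3 (by omega)
  calc n.choose j * k ^ j * (n - k) ^ (n - j)
      = (n.choose j * (n - k)) * (k ^ j * (n - k) ^ (n - (j+1))) := by rw [hE]; ring
    _ ≤ (n.choose (j+1) * k) * (k ^ j * (n - k) ^ (n - (j+1))) :=
        Nat.mul_le_mul_right _ key
    _ = n.choose (j + 1) * k ^ (j + 1) * (n - k) ^ (n - (j + 1)) := by ring

-- step down: for k ≤ j < n
lemma step_down (n k j : ℕ) (hk : k ≤ j) (hj : j < n) :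
    n.choose (j + 1) * k ^ (j + 1) * (n - k) ^ (n - (j + 1)) ≤
      n.choose j * k ^ j * (n - k) ^ (n - j) := by
  have hE : n - j = (n - (j+1)) + 1 := by omega
  have key : n.choose (j+1) * k ≤ n.choose j * (n - k) := by
    have h1 : n.choose (j+1) * (j+1) = n.choose j * (n - j) := Nat.choose_succ_right_eq n j
    have h2 : (n - j) * k ≤ (n - k) * (j + 1) :=
      Nat.mul_le_mul (by omega) (by omega)
    have h3 : n.choose (j+1) * k * (j+1) ≤ n.choose j * (n - k) * (j+1) := by
      calc n.choose (j+1) * k * (j+1) = n.choose (j+1) * (j+1) * k := by ring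
        _ = n.choose j * ((n-j)*k) := by rw [h1]; ring
        _ ≤ n.choose j * ((n-k)*(j+1)) := Nat.mul_le_mul_left _ h2
        _ = n.choose j * (n - k) * (j+1) := by ring
    exact Nat.le_of_mul_le_mul_right h3 (by omega)
  calc n.choose (j+1) * k ^ (j+1) * (n - k) ^ (n - (j+1))
      = (n.choose (j+1) * k) * (k ^ j * (n - k) ^ (n - (j+1))) := by ring
    _ ≤ (n.choose j * (n - k)) * (k ^ j * (n - k) ^ (n - (j+1))) :=
        Nat.mul_le_mul_right _ key
    _ = n.choose j * k ^ j * (n - k) ^ (n - j) := by rw [hE]; ring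

lemma term_le_max (n k : ℕ) (hk : k ≤ n) :
    ∀ i, i ≤ n → n.choose i * k ^ i * (n - k) ^ (n - i) ≤
      n.choose k * k ^ k * (n - k) ^ (n - k) := by
  have below : ∀ d : ℕ, n.choose (k - d) * k ^ (k - d) * (n - k) ^ (n - (k - d)) ≤
      n.choose k * k ^ k * (n - k) ^ (n - k) := by
    intro d
    induction d with
    | zero => simp
    | succ d ih =>
      rcases lt_or_ge d k with h | h
      · have he : k - d = (k - (d+1)) + 1 := by omega
        refine le_trans ?_ ih
        rw [he]
        exact step_up n k (k - (d+1)) hk (by omega)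
      · have : k - (d+1) = k - d := by omega
        rw [this]; exact ih
  have above : ∀ d : ℕ, k + d ≤ n → n.choose (k + d) * k ^ (k + d) * (n - k) ^ (n - (k + d)) ≤
      n.choose k * k ^ k * (n - k) ^ (n - k) := by
    intro d
    induction d with
    | zero => simp
    | succ d ih =>
      intro hd
      have : k + (d+1) = (k + d) + 1 := by omega
      rw [this]
      exact le_trans (step_down n k (k + d) (by omega) (by omega)) (ih (by omega))
  intro i hi
  rcases le_or_gt i k with h | h
  · have : i = k - (k - i) := by omega
    rw [this]; exact below (k - i)
  · have : i = k + (i - k) := by omega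
    rw [this]; exact above (i - k) (by omega)

lemma one_le_max (n k : ℕ) (h0 : 0 < k) (h1 : k < n) :
    (1 : ℝ) ≤ (n + 1) * (n.choose k * ((k : ℝ) / n) ^ k * (((n - k : ℕ) : ℝ) / n) ^ (n - k)) := by
  have hn : (0 : ℝ) < n := by exact_mod_cast (by omega : 0 < n)
  set p : ℝ := (k : ℝ) / n with hp
  have hq : 1 - p = ((n - k : ℕ) : ℝ) / n := by
    rw [hp, Nat.cast_sub h1.le, sub_div, div_self hn.ne']
  have hsum : (1 : ℝ) = ∑ i ∈ Finset.range (n + 1),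
      p ^ i * (1 - p) ^ (n - i) * (n.choose i : ℝ) := by
    rw [← add_pow]
    norm_num
  have hterm : ∀ i ∈ Finset.range (n + 1),
      p ^ i * (1 - p) ^ (n - i) * (n.choose i : ℝ) ≤
        (n.choose k : ℝ) * p ^ k * (1 - p) ^ (n - k) := by
    intro i hi
    have hile : i ≤ n := by
      simp only [Finset.mem_range] at hi; omega
    have hcast : (↑(n.choose i * k ^ i * (n - k) ^ (n - i)) : ℝ) ≤
        (↑(n.choose k * k ^ k * (n - k) ^ (n - k)) : ℝ) := by
      exact_mod_cast term_le_max n k h1.le i hile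
    push_cast [Nat.cast_sub h1.le] at hcast
    have hnn : (n : ℝ) ^ n = (n:ℝ) ^ i * (n:ℝ) ^ (n - i) := by
      rw [← pow_add]; congr 1; omega
    have hnn' : (n : ℝ) ^ n = (n:ℝ) ^ k * (n:ℝ) ^ (n - k) := by
      rw [← pow_add]; congr 1; omega
    have hd : p ^ i * (1 - p) ^ (n - i) * (n.choose i : ℝ)
        = (n.choose i : ℝ) * (k:ℝ) ^ i * ((n:ℝ) - k) ^ (n - i) / (n:ℝ) ^ n := by
      rw [hp, hq, div_pow, div_pow, hnn, Nat.cast_sub h1.le]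
      field_simp
      try ring
    have hd' : (n.choose k : ℝ) * p ^ k * (1 - p) ^ (n - k)
        = (n.choose k : ℝ) * (k:ℝ) ^ k * ((n:ℝ) - k) ^ (n - k) / (n:ℝ) ^ n := by
      rw [hp, hq, div_pow, div_pow, hnn', Nat.cast_sub h1.le]
      field_simp
      try ring
    rw [hd, hd']
    exact (div_le_div_iff_of_pos_right (by positivity)).mpr hcast
  calc (1:ℝ) = ∑ i ∈ Finset.range (n + 1),
        p ^ i * (1 - p) ^ (n - i) * (n.choose i : ℝ) := hsum
    _ ≤ ∑ _i ∈ Finset.range (n + 1), (n.choose k : ℝ) * p ^ k * (1 - p) ^ (n - k) :=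
        Finset.sum_le_sum hterm
    _ = (n + 1) * ((n.choose k : ℝ) * p ^ k * (1 - p) ^ (n - k)) := by
        rw [Finset.sum_const, Finset.card_range]; push_cast; ring
    _ = (n + 1) * (n.choose k * p ^ k * (((n - k : ℕ) : ℝ) / n) ^ (n - k)) := by rw [← hq]


lemma binEnt_contAt {x : ℝ} (h0 : 0 < x) (h1 : x < 1) : ContinuousAt binEnt x := by
  unfold binEnt
  have l1 : ContinuousAt (fun y : ℝ => Real.logb 2 y) x := Real.continuousAt_logb h0.ne'
  have l2 : ContinuousAt (fun y : ℝ => Real.logb 2 (1 - y)) x :=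
    (Real.continuousAt_logb (by linarith : (1:ℝ) - x ≠ 0)).comp
      (continuousAt_const.sub continuousAt_id)
  exact ((continuousAt_id.neg.mul l1).sub ((continuousAt_const.sub continuousAt_id).mul l2))

lemma floor_ratio_tendsto (x : ℝ) (hx : 0 < x) :
    Filter.Tendsto (fun n : ℕ => (⌊x * n⌋₊ : ℝ) / n) Filter.atTop (nhds x) := by
  have hlo : Filter.Tendsto (fun n : ℕ => x - 1 / (n : ℝ)) Filter.atTop (nhds x) := by
    simpa using (tendsto_const_nhds (x := x)).sub tendsto_one_div_atTop_nhds_zero_nat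
  apply tendsto_of_tendsto_of_tendsto_of_le_of_le' hlo tendsto_const_nhds
  · filter_upwards [Filter.eventually_ge_atTop 1] with n hn
    have hn0 : (0:ℝ) < n := by exact_mod_cast hn
    have h2 := Nat.sub_one_lt_floor (x * n)
    rw [le_div_iff₀ hn0]
    have h3 : (1 / (n:ℝ)) * n = 1 := by field_simp
    nlinarith
  · filter_upwards [Filter.eventually_ge_atTop 1] with n hn
    have hn0 : (0:ℝ) < n := by exact_mod_cast hn
    have h2 : (⌊x * n⌋₊ : ℝ) ≤ x * n := Nat.floor_le (by positivity)
    rw [div_le_iff₀ hn0]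
    linarith

lemma logP (n k : ℕ) (h0 : 0 < k) (h1 : k < n) :
    Real.log (((k:ℝ)/n)^k * (((n - k : ℕ):ℝ)/n)^(n-k))
      = -((n:ℝ) * binEnt ((k:ℝ)/n) * Real.log 2) := by
  have hn : (0:ℝ) < n := by exact_mod_cast (by omega : 0 < n)
  have hk : (0:ℝ) < (k:ℝ)/n := by
    have : (0:ℝ) < (k:ℝ) := by exact_mod_cast h0
    positivity
  have hnk : (0:ℝ) < ((n - k : ℕ):ℝ)/n := by
    have : (0:ℝ) < ((n - k : ℕ):ℝ) := by exact_mod_cast (by omega : 0 < n - k)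
    positivity
  have hl2 : Real.log 2 ≠ 0 := (Real.log_pos (by norm_num)).ne'
  have h1p : 1 - (k:ℝ)/n = ((n - k : ℕ):ℝ)/n := by
    rw [Nat.cast_sub h1.le, sub_div, div_self hn.ne']
  rw [Real.log_mul (by positivity) (by positivity), Real.log_pow, Real.log_pow]
  unfold binEnt
  rw [Real.logb, Real.logb, h1p, Nat.cast_sub h1.le]
  field_simp
  ring

theorem volume_bound (α ρ : ℝ) (hα0 : 0 < α) (hα : α < 1 / 2)
    (hρ0 : 0 < ρ) (hρ : ρ < 1 / 2) (hH : binEnt α + binEnt ρ > 1) :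
    ∃ N : ℕ, ∀ n : ℕ, N ≤ n →
      2 ^ n < n.choose ⌊α * n⌋₊ * ∑ i ∈ Finset.range (⌊ρ * n⌋₊ + 1), n.choose i := by
  set c := binEnt α + binEnt ρ - 1 with hcdef
  have hc : 0 < c := by simp only [hcdef]; linarith
  have hl2 : (0:ℝ) < Real.log 2 := Real.log_pos (by norm_num)
  -- entropy sums converge
  have hA : Filter.Tendsto (fun n : ℕ => binEnt ((⌊α * n⌋₊ : ℝ) / n) + binEnt ((⌊ρ * n⌋₊ : ℝ) / n))
      Filter.atTop (nhds (binEnt α + binEnt ρ)) := by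
    exact Filter.Tendsto.add
      (((binEnt_contAt hα0 (by linarith)).tendsto).comp (floor_ratio_tendsto α hα0))
      (((binEnt_contAt hρ0 (by linarith)).tendsto).comp (floor_ratio_tendsto ρ hρ0))
  have E1 : ∀ᶠ n : ℕ in Filter.atTop,
      1 + c / 2 < binEnt ((⌊α * n⌋₊ : ℝ) / n) + binEnt ((⌊ρ * n⌋₊ : ℝ) / n) :=
    hA.eventually_const_lt (by simp only [hcdef]; linarith)
  -- log bound
  have hL := (Asymptotics.isLittleO_iff.mp Real.isLittleO_log_id_atTop)
    (show (0:ℝ) < c * Real.log 2 / 16 by positivity)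
  have ht : Filter.Tendsto (fun n : ℕ => (n:ℝ) + 1) Filter.atTop Filter.atTop :=
    Filter.tendsto_atTop_add_const_right _ _ tendsto_natCast_atTop_atTop
  have E2 : ∀ᶠ n : ℕ in Filter.atTop,
      2 * Real.log ((n:ℝ) + 1) < c / 2 * n * Real.log 2 := by
    filter_upwards [ht.eventually hL, Filter.eventually_ge_atTop 1] with n hn h1
    have hn1 : (1:ℝ) ≤ (n:ℝ) := by exact_mod_cast h1
    simp only [id_eq, Real.norm_eq_abs] at hn
    have hle : Real.log ((n:ℝ) + 1) ≤ c * Real.log 2 / 16 * ((n:ℝ) + 1) := by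
      calc Real.log ((n:ℝ) + 1) ≤ |Real.log ((n:ℝ) + 1)| := le_abs_self _
        _ ≤ c * Real.log 2 / 16 * |(n:ℝ) + 1| := hn
        _ = c * Real.log 2 / 16 * ((n:ℝ) + 1) := by rw [abs_of_pos (by linarith)]
    nlinarith [mul_pos (mul_pos hc hl2) (show (0:ℝ) < 3 * (n:ℝ) - 1 by linarith)]
  have E3 : ∀ᶠ n : ℕ in Filter.atTop, 1 ≤ α * n :=
    (tendsto_natCast_atTop_atTop.const_mul_atTop hα0).eventually_ge_atTop 1
  have E4 : ∀ᶠ n : ℕ in Filter.atTop, 1 ≤ ρ * n :=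
    (tendsto_natCast_atTop_atTop.const_mul_atTop hρ0).eventually_ge_atTop 1
  rw [← Filter.eventually_atTop]
  filter_upwards [E1, E2, E3, E4, Filter.eventually_ge_atTop 1] with n hsum hlog hα1 hρ1 hn1
  set a := ⌊α * (n:ℝ)⌋₊ with hadef
  set r := ⌊ρ * (n:ℝ)⌋₊ with hrdef
  have hn0 : (0:ℝ) < n := by exact_mod_cast hn1
  have ha0 : 0 < a := Nat.floor_pos.mpr hα1
  have hr0 : 0 < r := Nat.floor_pos.mpr hρ1
  have han : a < n := by
    have h2 : (a:ℝ) ≤ α * n := Nat.floor_le (by positivity)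
    have : (a:ℝ) < n := by nlinarith
    exact_mod_cast this
  have hrn : r < n := by
    have h2 : (r:ℝ) ≤ ρ * n := Nat.floor_le (by positivity)
    have : (r:ℝ) < n := by nlinarith
    exact_mod_cast this
  have key1 := one_le_max n a ha0 han
  have key2 := one_le_max n r hr0 hrn
  set Pa : ℝ := ((a:ℝ)/n)^a * (((n - a : ℕ):ℝ)/n)^(n-a) with hPadef
  set Pr : ℝ := ((r:ℝ)/n)^r * (((n - r : ℕ):ℝ)/n)^(n-r) with hPrdef
  have hPa0 : 0 < Pa := by
    apply mul_pos <;> apply pow_pos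
    · have : (0:ℝ) < (a:ℝ) := by exact_mod_cast ha0
      positivity
    · have : (0:ℝ) < ((n - a : ℕ):ℝ) := by exact_mod_cast (by omega : 0 < n - a)
      positivity
  have hPr0 : 0 < Pr := by
    apply mul_pos <;> apply pow_pos
    · have : (0:ℝ) < (r:ℝ) := by exact_mod_cast hr0
      positivity
    · have : (0:ℝ) < ((n - r : ℕ):ℝ) := by exact_mod_cast (by omega : 0 < n - r)
      positivity
  set K : ℝ := 2^n * (((n:ℝ) + 1) * Pa) * (((n:ℝ) + 1) * Pr) with hKdef
  have hKpos : 0 < K := by positivity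
  have hlogPa : Real.log Pa = -((n:ℝ) * binEnt ((a:ℝ)/n) * Real.log 2) := logP n a ha0 han
  have hlogPr : Real.log Pr = -((n:ℝ) * binEnt ((r:ℝ)/n) * Real.log 2) := logP n r hr0 hrn
  have hK1 : K < 1 := by
    rw [← Real.log_neg_iff hKpos, hKdef]
    rw [Real.log_mul (by positivity) (by positivity),
        Real.log_mul (by positivity) (by positivity),
        Real.log_mul (by positivity) hPa0.ne',
        Real.log_mul (by positivity) hPr0.ne',
        Real.log_pow, hlogPa, hlogPr]
    have hmul : (n:ℝ) * (1 + c/2) * Real.log 2 ≤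
        (n:ℝ) * (binEnt ((a:ℝ)/n) + binEnt ((r:ℝ)/n)) * Real.log 2 := by
      apply mul_le_mul_of_nonneg_right _ hl2.le
      exact mul_le_mul_of_nonneg_left hsum.le hn0.le
    have hexp : (n:ℝ) * (1 + c/2) * Real.log 2
        = (n:ℝ) * Real.log 2 + c/2 * n * Real.log 2 := by ring
    push_cast
    linarith [hlog, hmul]
  have hCa : (0:ℝ) < (n.choose a : ℝ) := by exact_mod_cast Nat.choose_pos han.le
  have hCr : (0:ℝ) < (n.choose r : ℝ) := by exact_mod_cast Nat.choose_pos hrn.le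
  have hstep : (2:ℝ)^n < (n.choose a : ℝ) * (n.choose r : ℝ) := by
    calc (2:ℝ)^n = 2^n * 1 * 1 := by ring
      _ ≤ 2^n * ((((n:ℝ)+1)) * ((n.choose a : ℝ) * ((a:ℝ)/n)^a * (((n - a : ℕ):ℝ)/n)^(n-a)))
            * ((((n:ℝ)+1)) * ((n.choose r : ℝ) * ((r:ℝ)/n)^r * (((n - r : ℕ):ℝ)/n)^(n-r))) := by
          apply mul_le_mul (mul_le_mul_of_nonneg_left key1 (by positivity)) key2
            (by norm_num) (by positivity)
      _ = K * ((n.choose a : ℝ) * (n.choose r : ℝ)) := by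
          rw [hKdef, hPadef, hPrdef]; ring
      _ < 1 * ((n.choose a : ℝ) * (n.choose r : ℝ)) :=
          mul_lt_mul_of_pos_right hK1 (by positivity)
      _ = (n.choose a : ℝ) * (n.choose r : ℝ) := by ring
  have hS : n.choose r ≤ ∑ i ∈ Finset.range (r + 1), n.choose i :=
    Finset.single_le_sum (fun i _ => Nat.zero_le _) (Finset.self_mem_range_succ r)
  have hfin : (2:ℝ)^n < ((n.choose a * ∑ i ∈ Finset.range (r + 1), n.choose i : ℕ) : ℝ) := by
    refine hstep.trans_le ?_
    push_cast
    exact mul_le_mul_of_nonneg_left (by exact_mod_cast hS) hCa.le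
  exact_mod_cast hfin
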